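/- Fix s ∈ {−1, 1}, κ > 0, r > 0, M > 0, ρ > 0, and p ∈ ℝ with 1 − κ·M/(12π²r²) ≠ 0. For l > 0 define A(l) = √(1 + s·κ·l²·M/(6π²r⁴)) and G(l) = −(κ·M·ρ/(12π²r³))·(1 + p/ρ)·A(l)^{−1}·[π²r⁴p/M − (12·s·π²r⁴/(κ·l²·M))·(1 − A(l))]·[1 + s·(r²/l²)·(1 − A(l))]^{−1}. Then as l → 0⁺, G(l) tends to −(κ·M·ρ/(12π²r³))·(1 + p/ρ)·(1 + π²r⁴p/M)·(1 − κ·M/(12π²r²))^{−1}. -/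

import Mathlib

open Real Filter

/-- As the length scale `l → 0⁺`, the right-hand side `G(l)` of the
generalized five-dimensional TOV equation (se13) tends to the right-hand
side of the standard five-dimensional TOV equation (ectov02)/(A28). -/
theorem stmt_3 (s κ r M ρ p : ℝ) (hs : s = 1 ∨ s = -1) (hκ : 0 < κ)
    (hr : 0 < r) (hM : 0 < M) (hρ : 0 < ρ)
    (hden : 1 - κ * M / (12 * π ^ 2 * r ^ 2) ≠ 0) :
    Tendsto
      (fun l : ℝ =>
        -(κ * M * ρ / (12 * π ^ 2 * r ^ 3)) * (1 + p / ρ) *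
          (Real.sqrt (1 + s * κ * l ^ 2 * M / (6 * π ^ 2 * r ^ 4)))⁻¹ *
          (π ^ 2 * r ^ 4 * p / M
            - 12 * s * π ^ 2 * r ^ 4 / (κ * l ^ 2 * M) *
              (1 - Real.sqrt (1 + s * κ * l ^ 2 * M / (6 * π ^ 2 * r ^ 4)))) *
          (1 + s * (r ^ 2 / l ^ 2) *
            (1 - Real.sqrt (1 + s * κ * l ^ 2 * M / (6 * π ^ 2 * r ^ 4))))⁻¹)
      (nhdsWithin 0 (Set.Ioi 0))
      (nhds (-(κ * M * ρ / (12 * π ^ 2 * r ^ 3)) * (1 + p / ρ) *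
        (1 + π ^ 2 * r ^ 4 * p / M) * (1 - κ * M / (12 * π ^ 2 * r ^ 2))⁻¹)) := by
  have hπ : (0:ℝ) < π := pi_pos
  have hπ' : π ≠ 0 := hπ.ne'
  have hr' : r ≠ 0 := hr.ne'
  have hκ' : κ ≠ 0 := hκ.ne'
  have hM' : M ≠ 0 := hM.ne'
  have hs2 : s * s = 1 := by rcases hs with h | h <;> subst h <;> norm_num
  set c : ℝ := s * κ * M / (6 * π ^ 2 * r ^ 4) with hc
  have hcl : ∀ l : ℝ, 1 + s * κ * l ^ 2 * M / (6 * π ^ 2 * r ^ 4) = 1 + c * l ^ 2 := by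
    intro l; rw [hc]; ring
  set K : ℝ := -(κ * M * ρ / (12 * π ^ 2 * r ^ 3)) * (1 + p / ρ) with hK
  set P : ℝ := π ^ 2 * r ^ 4 * p / M with hP
  set Q : ℝ := 12 * s * π ^ 2 * r ^ 4 / (κ * M) with hQ
  set f : ℝ → ℝ := fun l => (1 - Real.sqrt (1 + c * l ^ 2)) / l ^ 2 with hfdef
  -- eventually 1 + c l^2 > 0
  have hpos : ∀ᶠ l in nhdsWithin (0:ℝ) (Set.Ioi 0), 0 < 1 + c * l ^ 2 := by
    have hcont : Tendsto (fun l : ℝ => 1 + c * l ^ 2) (nhdsWithin 0 (Set.Ioi 0)) (nhds 1) := by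
      have : Continuous fun l : ℝ => 1 + c * l ^ 2 := by continuity
      have := this.continuousAt (x := 0)
      simpa using this.continuousWithinAt.tendsto
    exact hcont.eventually (eventually_gt_nhds (by norm_num))
  -- limit of f
  have hf : Tendsto f (nhdsWithin 0 (Set.Ioi 0)) (nhds (-(c / 2))) := by
    have h1 : Tendsto (fun l : ℝ => -c / (1 + Real.sqrt (1 + c * l ^ 2)))
        (nhdsWithin 0 (Set.Ioi 0)) (nhds (-(c / 2))) := by
      have hct : ContinuousAt (fun l : ℝ => -c / (1 + Real.sqrt (1 + c * l ^ 2))) 0 := by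
        apply ContinuousAt.div
        · fun_prop
        · fun_prop
        · simp [Real.sqrt_one]
      have heq : -c / (1 + Real.sqrt (1 + c * (0:ℝ) ^ 2)) = -(c / 2) := by
        norm_num [Real.sqrt_one]
        ring
      rw [← heq]
      exact hct.continuousWithinAt.tendsto
    refine h1.congr' ?_
    filter_upwards [hpos, self_mem_nhdsWithin] with l hl hl0
    have hl0' : (l:ℝ) ≠ 0 := (Set.mem_Ioi.mp hl0).ne'
    have hsq : Real.sqrt (1 + c * l ^ 2) * Real.sqrt (1 + c * l ^ 2) = 1 + c * l ^ 2 :=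
      Real.mul_self_sqrt hl.le
    have hden2 : 0 < 1 + Real.sqrt (1 + c * l ^ 2) := by positivity
    show -c / (1 + Real.sqrt (1 + c * l ^ 2)) = (1 - Real.sqrt (1 + c * l ^ 2)) / l ^ 2
    field_simp
    nlinarith [hsq]
  -- limit of sqrt part
  have hA : Tendsto (fun l : ℝ => Real.sqrt (1 + c * l ^ 2))
      (nhdsWithin 0 (Set.Ioi 0)) (nhds 1) := by
    have hct : ContinuousAt (fun l : ℝ => Real.sqrt (1 + c * l ^ 2)) 0 := by fun_prop
    have := hct.continuousWithinAt.tendsto (s := Set.Ioi 0)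
    simpa [Real.sqrt_one] using this
  -- combined limit of the rewritten expression
  have hmain : Tendsto (fun l : ℝ =>
      K * (Real.sqrt (1 + c * l ^ 2))⁻¹ * (P - Q * f l) * (1 + s * r ^ 2 * f l)⁻¹)
      (nhdsWithin 0 (Set.Ioi 0))
      (nhds (K * (1:ℝ)⁻¹ * (P - Q * (-(c / 2))) * (1 + s * r ^ 2 * (-(c / 2)))⁻¹)) := by
    apply Tendsto.mul
    apply Tendsto.mul
    · exact (tendsto_const_nhds.mul (hA.inv₀ one_ne_zero))
    · exact tendsto_const_nhds.sub (tendsto_const_nhds.mul hf)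
    · apply Tendsto.inv₀
      · exact tendsto_const_nhds.add (tendsto_const_nhds.mul hf)
      · have : 1 + s * r ^ 2 * (-(c / 2)) = 1 - κ * M / (12 * π ^ 2 * r ^ 2) := by
          rw [hc]; field_simp; linear_combination (-(12*κ*M)) * hs2
        rw [this]; exact hden
  have hval : K * (1:ℝ)⁻¹ * (P - Q * (-(c / 2))) * (1 + s * r ^ 2 * (-(c / 2)))⁻¹
      = K * (1 + π ^ 2 * r ^ 4 * p / M) * (1 - κ * M / (12 * π ^ 2 * r ^ 2))⁻¹ := by
    have h1 : 1 + s * r ^ 2 * (-(c / 2)) = 1 - κ * M / (12 * π ^ 2 * r ^ 2) := by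
      rw [hc]; field_simp; linear_combination (-(12*κ*M)) * hs2
    have h2 : P - Q * (-(c / 2)) = 1 + π ^ 2 * r ^ 4 * p / M := by
      rw [hP, hQ, hc]; field_simp; linear_combination (12*M) * hs2
    rw [h1, h2]; ring
  rw [hval] at hmain
  refine hmain.congr' ?_ |>.mono_right (le_of_eq ?_)
  · filter_upwards [self_mem_nhdsWithin] with l hl0
    have hl0' : (l:ℝ) ≠ 0 := (Set.mem_Ioi.mp hl0).ne'
    rw [hcl l]
    have e0 : 12 * s * π ^ 2 * r ^ 4 / (κ * l ^ 2 * M) = Q * (l ^ 2)⁻¹ := by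
      rw [hQ]
      field_simp
    have e1 : Q * f l = 12 * s * π ^ 2 * r ^ 4 / (κ * l ^ 2 * M) * (1 - Real.sqrt (1 + c * l ^ 2)) := by
      rw [e0]
      simp only [hfdef]
      ring
    have e2 : s * r ^ 2 * f l = s * (r ^ 2 / l ^ 2) * (1 - Real.sqrt (1 + c * l ^ 2)) := by
      simp only [hfdef]; ring
    rw [e1, e2]
  · rw [hK]
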